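/- Let B > 0, k > 0 and A satisfy 0 < A < k. Define g(p) = (Ap - kp²)/(B + k²p(1-p)) for p ∈ [0,1]. Then g'(p) = 0 if and only if Q(p) := AB - 2Bkp + k²(A-k)p² = 0, and g attains its maximum on [0,1] at p* = B/(k(k-A))·(√(1 + (A/B)(k-A)) - 1). -/

import Mathlib

theorem gov_utility_critical_points (A B k : ℝ)
    (hB : 0 < B) (hk : 0 < k) (hA0 : 0 < A) (hAk : A < k)
    (g Q : ℝ → ℝ)
    (hg : ∀ p, g p = (A*p - k*p^2)/(B + k^2*p*(1-p)))
    (hQ : ∀ p, Q p = A*B - 2*B*k*p + k^2*(A-k)*p^2)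
    (pstar : ℝ)
    (hp : pstar = B/(k*(k-A)) * (Real.sqrt (1 + (A/B)*(k-A)) - 1)) :
    (∀ p ∈ Set.Icc (0:ℝ) 1, (deriv g p = 0 ↔ Q p = 0)) ∧
    IsMaxOn g (Set.Icc (0:ℝ) 1) pstar := by
  have hkA : 0 < k - A := by linarith
  set s := Real.sqrt (1 + (A/B)*(k-A)) with hs
  have harg : (1:ℝ) < 1 + (A/B)*(k-A) := by
    have : 0 < (A/B)*(k-A) := by positivity
    linarith
  have hs2 : s^2 = 1 + (A/B)*(k-A) := Real.sq_sqrt (by linarith)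
  have hs1 : 1 < s := by
    nlinarith [Real.sqrt_nonneg (1 + (A/B)*(k-A))]
  have hps0 : 0 < pstar := by
    rw [hp]
    have : 0 < B/(k*(k-A)) := by positivity
    nlinarith
  -- Q pstar = 0
  have hQps : A*B - 2*B*k*pstar + k^2*(A-k)*pstar^2 = 0 := by
    rw [hp]
    have hBne : B ≠ 0 := ne_of_gt hB
    have hkne : k ≠ 0 := ne_of_gt hk
    have hkAne : k - A ≠ 0 := ne_of_gt hkA
    have hs2' : B*s^2 = B + A*(k-A) := by
      rw [hs2]; field_simp
    field_simp
    linear_combination (-(B*(k-A))) * hs2'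
  -- factorization
  have hfac : ∀ p, Q p = (p - pstar) * (k^2*(A-k)*(p+pstar) - 2*B*k) := by
    intro p
    rw [hQ p]
    linear_combination hQps
  have hL : ∀ p : ℝ, 0 ≤ p → k^2*(A-k)*(p+pstar) - 2*B*k < 0 := by
    intro p hp0
    have hpp : 0 < p + pstar := by linarith
    nlinarith [mul_pos (mul_pos (pow_pos hk 2) hkA) hpp, mul_pos hB hk]
  have hps1 : pstar < 1 := by
    have hQ1 : Q 1 < 0 := by rw [hQ]; nlinarith
    have := hfac 1
    have hL1 := hL 1 (by norm_num)
    nlinarith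
  -- denominator positive on Icc 0 1
  have hD : ∀ p ∈ Set.Icc (0:ℝ) 1, 0 < B + k^2*p*(1-p) := by
    rintro p ⟨h0, h1⟩
    nlinarith [mul_nonneg (mul_nonneg (sq_nonneg k) h0) (by linarith : (0:ℝ) ≤ 1-p)]
  -- derivative
  have hderiv : ∀ p ∈ Set.Icc (0:ℝ) 1,
      HasDerivAt g (Q p / (B + k^2*p*(1-p))^2) p := by
    intro p hpmem
    have hDp := hD p hpmem
    have hN : HasDerivAt (fun x : ℝ => A*x - k*x^2) (A - 2*k*p) p := by
      have h1 : HasDerivAt (fun x : ℝ => A*x) A p := by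
        simpa using (hasDerivAt_id p).const_mul A
      have h2 : HasDerivAt (fun x : ℝ => k*x^2) (k*(2*p)) p := by
        simpa using ((hasDerivAt_pow 2 p).const_mul k)
      have := h1.sub h2
      exact this.congr_deriv (by ring)
    have hDD : HasDerivAt (fun x : ℝ => B + k^2*x*(1-x)) (k^2 - 2*k^2*p) p := by
      have h1 : HasDerivAt (fun x : ℝ => B + (k^2*x - k^2*x^2)) (k^2 - k^2*(2*p)) p := by
        have ha : HasDerivAt (fun x : ℝ => k^2*x) (k^2) p := by
          simpa using (hasDerivAt_id p).const_mul (k^2)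
        have hb : HasDerivAt (fun x : ℝ => k^2*x^2) (k^2*(2*p)) p := by
          simpa using ((hasDerivAt_pow 2 p).const_mul (k^2))
        have := (hasDerivAt_const p B).add (ha.sub hb)
        simp only [zero_add] at this
        exact this
      have heq : (fun x : ℝ => B + k^2*x*(1-x)) = fun x : ℝ => B + (k^2*x - k^2*x^2) := by
        funext x; ring
      rw [heq]
      convert h1 using 1; ring
    have hdiv := hN.div hDD (ne_of_gt hDp)
    have hgeq : g = fun x : ℝ => (A*x - k*x^2)/(B + k^2*x*(1-x)) := funext hg
    rw [hgeq]
    refine hdiv.congr_deriv ?_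
    rw [hQ]
    congr 1
    ring
  have hderiv' : ∀ p ∈ Set.Icc (0:ℝ) 1,
      deriv g p = Q p / (B + k^2*p*(1-p))^2 := fun p hpm => (hderiv p hpm).deriv
  constructor
  · intro p hpm
    rw [hderiv' p hpm]
    have hDp := hD p hpm
    constructor
    · intro h
      rcases div_eq_zero_iff.mp h with h' | h'
      · exact h'
      · exact absurd h' (by positivity)
    · intro h; rw [h]; simp
  · -- max
    have hpsmem : pstar ∈ Set.Icc (0:ℝ) 1 := ⟨le_of_lt hps0, le_of_lt hps1⟩
    have hcont : ContinuousOn g (Set.Icc 0 1) := fun p hpm =>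
      ((hderiv p hpm).differentiableAt.continuousAt).continuousWithinAt
    have hsub1 : Set.Icc (0:ℝ) pstar ⊆ Set.Icc 0 1 :=
      Set.Icc_subset_Icc le_rfl (le_of_lt hps1)
    have hsub2 : Set.Icc pstar 1 ⊆ Set.Icc (0:ℝ) 1 :=
      Set.Icc_subset_Icc (le_of_lt hps0) le_rfl
    have hmono : StrictMonoOn g (Set.Icc 0 pstar) := by
      apply strictMonoOn_of_deriv_pos (convex_Icc 0 pstar) (hcont.mono hsub1)
      intro p hpm
      rw [interior_Icc] at hpm
      have hpm' : p ∈ Set.Icc (0:ℝ) 1 := ⟨le_of_lt hpm.1, le_trans (le_of_lt hpm.2) (le_of_lt hps1)⟩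
      rw [hderiv' p hpm']
      have hQp : 0 < Q p := by
        rw [hfac p]
        have := hL p (le_of_lt hpm.1)
        nlinarith [hpm.2]
      exact div_pos hQp (pow_pos (hD p hpm') 2)
    have hanti : StrictAntiOn g (Set.Icc pstar 1) := by
      apply strictAntiOn_of_deriv_neg (convex_Icc pstar 1) (hcont.mono hsub2)
      intro p hpm
      rw [interior_Icc] at hpm
      have hpm' : p ∈ Set.Icc (0:ℝ) 1 := ⟨le_trans (le_of_lt hps0) (le_of_lt hpm.1), le_of_lt hpm.2⟩
      rw [hderiv' p hpm']
      have hQp : Q p < 0 := by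
        rw [hfac p]
        have := hL p (le_trans (le_of_lt hps0) (le_of_lt hpm.1))
        nlinarith [hpm.1]
      exact div_neg_of_neg_of_pos hQp (pow_pos (hD p hpm') 2)
    rw [isMaxOn_iff]
    intro p hpm
    rcases le_total p pstar with hle | hle
    · exact hmono.monotoneOn ⟨hpm.1, hle⟩ ⟨le_of_lt hps0, le_rfl⟩ hle
    · exact hanti.antitoneOn ⟨le_rfl, le_of_lt hps1⟩ ⟨hle, hpm.2⟩ hle
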